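/- Let (X,u) and (Y,v) be closure spaces. Define τ to be the collection of all subsets G of Y^X such that for every f ∈ G and every net (f_λ)_{λ∈Λ} in Y^X satisfying limsup_Λ f_λ⁻¹(B) ⊆ f⁻¹(v(B)) for every B ⊆ Y, there exists λ₀ ∈ Λ with f_λ ∈ G for all λ ≥ λ₀. Then τ is a topology on Y^X, τ (i.e., its Kuratowski closure operator) is proper, and every proper topology on Y^X is coarser than τ; consequently a subset G of Y^X is open in the finest proper topology if and only if G ∈ τ. -/
import Mathlib


open Set

universe u

/-- A Čech closure operator on a type `X`: it satisfies (C1) `cl ∅ = ∅`,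
(C2) `A ⊆ cl A` and (C3) `cl (A ∪ B) = cl A ∪ cl B`.  The pair `(X, u)` is a
(Čech) closure space. -/
structure CechClosure (X : Type u) : Type u where
  cl : Set X → Set X
  cl_empty : cl ∅ = ∅
  subset_cl : ∀ A : Set X, A ⊆ cl A
  cl_union : ∀ A B : Set X, cl (A ∪ B) = cl A ∪ cl B

namespace CechClosure

variable {X Y Z : Type u}

/-- The interior operator of a closure space: `int_u A = X \ u (X \ A)`. -/
def interior (u : CechClosure X) (A : Set X) : Set X := (u.cl Aᶜ)ᶜ

/-- `U` is a neighbourhood of `x` in `(X, u)` if `x ∈ int_u U`. -/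
def Nhd (u : CechClosure X) (x : X) (U : Set X) : Prop := x ∈ u.interior U

theorem interior_subset (u : CechClosure X) (A : Set X) : u.interior A ⊆ A := by
  intro x hx
  by_contra h
  exact hx (u.subset_cl _ h)

theorem interior_inter (u : CechClosure X) (A B : Set X) :
    u.interior (A ∩ B) = u.interior A ∩ u.interior B := by
  unfold interior
  rw [compl_inter, u.cl_union, compl_union]

theorem nhd_univ (u : CechClosure X) (x : X) : u.Nhd x univ := by
  simp [Nhd, interior, u.cl_empty]

theorem nhd_inter (u : CechClosure X) {x : X} {A B : Set X} (hA : u.Nhd x A)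
    (hB : u.Nhd x B) : u.Nhd x (A ∩ B) := by
  have h := u.interior_inter A B
  unfold Nhd at *
  rw [h]
  exact ⟨hA, hB⟩

/-- A function `f : (X, u) → (Y, v)` between closure spaces is continuous if
`f (u A) ⊆ v (f A)` for every `A ⊆ X`. -/
def Continuous (u : CechClosure X) (v : CechClosure Y) (f : X → Y) : Prop :=
  ∀ A : Set X, f '' u.cl A ⊆ v.cl (f '' A)

/-- The product of two closure spaces: `(z, x)` is in the closure of `S` iff every
"rectangle" `W ×ˢ U` of neighbourhoods `W` of `z` and `U` of `x` meets `S`. -/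
def prod (w : CechClosure Z) (u : CechClosure X) : CechClosure (Z × X) where
  cl S := {p | ∀ W U, w.Nhd p.1 W → u.Nhd p.2 U → (W ×ˢ U ∩ S).Nonempty}
  cl_empty := by
    ext p
    simp only [mem_setOf_eq, mem_empty_iff_false, iff_false]
    intro h
    rcases h univ univ (w.nhd_univ _) (u.nhd_univ _) with ⟨q, -, hq⟩
    exact hq
  subset_cl := by
    intro S p hp W U hW hU
    exact ⟨p, ⟨⟨w.interior_subset _ hW, u.interior_subset _ hU⟩, hp⟩⟩
  cl_union := by
    intro S T
    ext p
    simp only [mem_setOf_eq, mem_union]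
    constructor
    · intro h
      by_contra hc
      push_neg at hc
      obtain ⟨h1, h2⟩ := hc
      simp only [← Set.not_nonempty_iff_eq_empty] at h1 h2
      obtain ⟨W1, U1, hW1, hU1, hne1⟩ := h1
      obtain ⟨W2, U2, hW2, hU2, hne2⟩ := h2
      rcases h (W1 ∩ W2) (U1 ∩ U2) (w.nhd_inter hW1 hW2) (u.nhd_inter hU1 hU2) with
        ⟨q, ⟨⟨hq1, hq2⟩, hqST⟩⟩
      rcases hqST with hqS | hqT
      · exact hne1 ⟨q, ⟨⟨hq1.1, hq2.1⟩, hqS⟩⟩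
      · exact hne2 ⟨q, ⟨⟨hq1.2, hq2.2⟩, hqT⟩⟩
    · rintro (h | h) W U hW hU
      · rcases h W U hW hU with ⟨q, hq1, hq2⟩
        exact ⟨q, hq1, Or.inl hq2⟩
      · rcases h W U hW hU with ⟨q, hq1, hq2⟩
        exact ⟨q, hq1, Or.inr hq2⟩

/-- `Y^X`: the type of continuous functions between the closure spaces
`(X, u)` and `(Y, v)`. -/
def ContMap (u : CechClosure X) (v : CechClosure Y) : Type u :=
  {f : X → Y // Continuous u v f}

/-- A closure operator `σ` on `Y^X` is proper (splitting) if for every closure space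
`(Z, w)`, continuity of `g : (Z, w) × (X, u) → (Y, v)` implies continuity of
`g* : (Z, w) → (Y^X, σ)`, where `g (z, x) = (g* z) x`. -/
def Proper (u : CechClosure X) (v : CechClosure Y) (σ : CechClosure (ContMap u v)) : Prop :=
  ∀ (Z : Type u) (w : CechClosure Z) (G : Z → ContMap u v),
    Continuous (w.prod u) v (fun p => (G p.1).1 p.2) → Continuous w σ G

/-- A closure operator `σ` on `Y^X` is admissible (jointly continuous) if for every closure
space `(Z, w)`, continuity of `g* : (Z, w) → (Y^X, σ)` implies continuity of
`g : (Z, w) × (X, u) → (Y, v)`, where `g (z, x) = (g* z) x`. -/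
def Admissible (u : CechClosure X) (v : CechClosure Y) (σ : CechClosure (ContMap u v)) : Prop :=
  ∀ (Z : Type u) (w : CechClosure Z) (G : Z → ContMap u v),
    Continuous w σ G → Continuous (w.prod u) v (fun p => (G p.1).1 p.2)

/-- A topological space regarded as a closure space via its (Kuratowski) closure operator. -/
def ofTop {Z : Type u} (t : TopologicalSpace Z) : CechClosure Z :=
  letI := t
  { cl := fun A => _root_.closure A
    cl_empty := closure_empty
    subset_cl := fun _ => subset_closure
    cl_union := fun _ _ => closure_union }

/-- `le` is the order relation of a directed set: a reflexive and transitive relation on a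
nonempty type in which every two elements have an upper bound. -/
structure IsDirectedOrder {Λ : Type*} (le : Λ → Λ → Prop) : Prop where
  refl : ∀ a, le a a
  trans : ∀ a b c, le a b → le b c → le a c
  directed : ∀ a b, ∃ c, le a c ∧ le b c
  nonempty : Nonempty Λ

/-- Convergence of a net `s : Λ → X` (with order `le` on `Λ`) to a point `x` in a closure
space `(X, u)`: every neighbourhood of `x` contains `s l` residually. -/
def NetConv (u : CechClosure X) {Λ : Type*} (le : Λ → Λ → Prop) (s : Λ → X) (x : X) : Prop :=
  ∀ U : Set X, u.Nhd x U → ∃ l₀, ∀ l, le l₀ l → s l ∈ U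

/-- The product order on `Λ × M`. -/
def prodLE {Λ M : Type*} (leΛ : Λ → Λ → Prop) (leM : M → M → Prop) :
    Λ × M → Λ × M → Prop :=
  fun p q => leΛ p.1 q.1 ∧ leM p.2 q.2

/-- A net `F : Λ → Y^X` converges continuously to `f ∈ Y^X` if for every `x ∈ X` and every
net `s : M → X` converging to `x` in `(X, u)`, the net `(l, m) ↦ (F l) (s m)` (indexed by
`Λ × M` with the product order) converges to `f x` in `(Y, v)`. -/
def ContConv (u : CechClosure X) (v : CechClosure Y) {Λ : Type u} (leΛ : Λ → Λ → Prop)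
    (F : Λ → ContMap u v) (f : ContMap u v) : Prop :=
  ∀ (M : Type u) (leM : M → M → Prop), IsDirectedOrder leM →
    ∀ (s : M → X) (x : X), NetConv u leM s x →
      NetConv v (prodLE leΛ leM) (fun p : Λ × M => (F p.1).1 (s p.2)) (f.1 x)

/-- The upper limit of a net `A : Λ → Set X` of subsets of a closure space `(X, u)`: the set
of points `x` such that for every `l₀` and every neighbourhood `U` of `x` there is `l ≥ l₀`
with `A l ∩ U ≠ ∅`. -/
def UpperLim (u : CechClosure X) {Λ : Type*} (le : Λ → Λ → Prop) (A : Λ → Set X) : Set X :=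
  {x | ∀ (l₀ : Λ) (U : Set X), u.Nhd x U → ∃ l, le l₀ l ∧ (A l ∩ U).Nonempty}

/-- `g : M → α` is a subnet of `f : Λ → α`: there is `φ : M → Λ` with `g = f ∘ φ` such that
`φ` is residually above any given index of `Λ`. -/
def IsSubnet {α : Type*} {Λ M : Type*} (leΛ : Λ → Λ → Prop) (leM : M → M → Prop)
    (f : Λ → α) (g : M → α) : Prop :=
  ∃ φ : M → Λ, (∀ m, g m = f (φ m)) ∧ ∀ l₀, ∃ m₀, ∀ m, leM m₀ m → leΛ l₀ (φ m)

end CechClosure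
namespace CechClosure

variable {X Y : Type u}

/-- The collection `τ` of all subsets `G` of `Y^X` such that for every `f ∈ G` and every
net `(f_λ)` in `Y^X` with `limsup_Λ f_λ⁻¹(B) ⊆ f⁻¹(v B)` for every `B ⊆ Y`, the net is
residually in `G`. -/
def tau (u : CechClosure X) (v : CechClosure Y) : Set (Set (ContMap u v)) :=
  {G | ∀ f ∈ G, ∀ (Λ : Type u) (leΛ : Λ → Λ → Prop), IsDirectedOrder leΛ →
    ∀ F : Λ → ContMap u v,
      (∀ B : Set Y, UpperLim u leΛ (fun l => (F l).1 ⁻¹' B) ⊆ f.1 ⁻¹' (v.cl B)) →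
      ∃ l₀, ∀ l, leΛ l₀ l → F l ∈ G}

/-! ### Auxiliary lemmas -/

theorem cl_mono (u : CechClosure X) {A B : Set X} (h : A ⊆ B) : u.cl A ⊆ u.cl B := by
  have h2 : u.cl B = u.cl A ∪ u.cl B := by
    rw [← u.cl_union, union_eq_self_of_subset_left h]
  rw [h2]; exact subset_union_left

theorem mem_cl_iff (u : CechClosure X) (T : Set X) (x : X) :
    x ∈ u.cl T ↔ ∀ U, u.Nhd x U → (U ∩ T).Nonempty := by
  constructor
  · intro hx U hU
    by_contra hne
    rw [not_nonempty_iff_eq_empty] at hne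
    have hTU : T ⊆ Uᶜ := fun y hy hyU =>
      (eq_empty_iff_forall_notMem.mp hne y) ⟨hyU, hy⟩
    exact hU (cl_mono u hTU hx)
  · intro h
    by_contra hx
    have hn : u.Nhd x Tᶜ := by
      simp only [Nhd, interior, compl_compl]
      exact hx
    rcases h Tᶜ hn with ⟨y, hy1, hy2⟩
    exact hy1 hy2

/-- The closure space on `Option Λ` in which `none` is the limit of every cofinal
family of `some l`'s. -/
def netSpace {Λ : Type u} (le : Λ → Λ → Prop) (h : IsDirectedOrder le) :
    CechClosure (Option Λ) where
  cl S := S ∪ {z | z = none ∧ ∀ l₀, ∃ l, le l₀ l ∧ some l ∈ S}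
  cl_empty := by
    ext z
    simp only [mem_union, mem_setOf_eq, mem_empty_iff_false, false_or, iff_false,
      not_and]
    rintro rfl hc
    obtain ⟨l₀⟩ := h.nonempty
    rcases hc l₀ with ⟨l, -, hl⟩
    exact hl
  subset_cl := fun S => subset_union_left
  cl_union := by
    intro S T
    ext z
    simp only [mem_union, mem_setOf_eq]
    constructor
    · rintro (hz | ⟨rfl, hc⟩)
      · rcases hz with hz | hz
        · exact Or.inl (Or.inl hz)
        · exact Or.inr (Or.inl hz)
      · by_cases hS : ∀ l₀, ∃ l, le l₀ l ∧ some l ∈ S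
        · exact Or.inl (Or.inr ⟨rfl, hS⟩)
        · push_neg at hS
          obtain ⟨l₁, hl₁⟩ := hS
          refine Or.inr (Or.inr ⟨rfl, fun l₀ => ?_⟩)
          obtain ⟨l₂, hl₂, hl₂'⟩ := h.directed l₀ l₁
          rcases hc l₂ with ⟨l, hle, hl⟩
          rcases hl with hl | hl
          · exact absurd hl (hl₁ l (h.trans _ _ _ hl₂' hle))
          · exact ⟨l, h.trans _ _ _ hl₂ hle, hl⟩
    · rintro ((hz | ⟨rfl, hc⟩) | (hz | ⟨rfl, hc⟩))
      · exact Or.inl (Or.inl hz)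
      · exact Or.inr ⟨rfl, fun l₀ => (hc l₀).imp fun l hl => ⟨hl.1, Or.inl hl.2⟩⟩
      · exact Or.inl (Or.inr hz)
      · exact Or.inr ⟨rfl, fun l₀ => (hc l₀).imp fun l hl => ⟨hl.1, Or.inr hl.2⟩⟩

theorem netSpace_nhd_some {Λ : Type u} {le : Λ → Λ → Prop} {h : IsDirectedOrder le}
    {l : Λ} {U : Set (Option Λ)} :
    (netSpace le h).Nhd (some l) U ↔ some l ∈ U := by
  simp only [Nhd, interior, netSpace, mem_compl_iff, mem_union, mem_setOf_eq,
    not_or, not_and]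
  constructor
  · intro hx
    simpa using hx.1
  · intro hx
    exact ⟨by simpa using hx, fun hc => absurd hc (by simp)⟩

theorem netSpace_nhd_none {Λ : Type u} {le : Λ → Λ → Prop} {h : IsDirectedOrder le}
    {U : Set (Option Λ)} :
    (netSpace le h).Nhd none U ↔ none ∈ U ∧ ∃ l₀, ∀ l, le l₀ l → some l ∈ U := by
  simp only [Nhd, interior, netSpace, mem_compl_iff, mem_union, mem_setOf_eq,
    not_or, not_and]
  constructor
  · intro hx
    refine ⟨by simpa using hx.1, ?_⟩
    have := hx.2 trivial
    push_neg at this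
    obtain ⟨l₀, hl₀⟩ := this
    exact ⟨l₀, fun l hl => by simpa using hl₀ l hl⟩
  · rintro ⟨h1, l₀, hl₀⟩
    refine ⟨by simpa using h1, fun _ hc => ?_⟩
    rcases hc l₀ with ⟨l, hle, hl⟩
    exact hl (hl₀ l hle)

/-! ### `τ` is a topology -/

theorem tau_univ (u : CechClosure X) (v : CechClosure Y) : Set.univ ∈ tau u v := by
  intro f _ Λ leΛ hΛ F _
  obtain ⟨l₀⟩ := hΛ.nonempty
  exact ⟨l₀, fun l _ => mem_univ _⟩

theorem tau_inter (u : CechClosure X) (v : CechClosure Y) :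
    ∀ G₁ ∈ tau u v, ∀ G₂ ∈ tau u v, G₁ ∩ G₂ ∈ tau u v := by
  intro G₁ h₁ G₂ h₂ f hf Λ leΛ hΛ F hUL
  obtain ⟨l₁, hl₁⟩ := h₁ f hf.1 Λ leΛ hΛ F hUL
  obtain ⟨l₂, hl₂⟩ := h₂ f hf.2 Λ leΛ hΛ F hUL
  obtain ⟨l₀, ha, hb⟩ := hΛ.directed l₁ l₂
  exact ⟨l₀, fun l hl => ⟨hl₁ l (hΛ.trans _ _ _ ha hl), hl₂ l (hΛ.trans _ _ _ hb hl)⟩⟩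

theorem tau_sUnion (u : CechClosure X) (v : CechClosure Y) :
    ∀ 𝒢 ⊆ tau u v, ⋃₀ 𝒢 ∈ tau u v := by
  intro 𝒢 h𝒢 f hf Λ leΛ hΛ F hUL
  obtain ⟨G, hG, hfG⟩ := hf
  obtain ⟨l₀, hl₀⟩ := h𝒢 hG f hfG Λ leΛ hΛ F hUL
  exact ⟨l₀, fun l hl => ⟨G, hG, hl₀ l hl⟩⟩

theorem isOpen_generateFrom_tau_iff (u : CechClosure X) (v : CechClosure Y)
    (G : Set (ContMap u v)) :
    (TopologicalSpace.generateFrom (tau u v)).IsOpen G ↔ G ∈ tau u v := by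
  constructor
  · intro h
    induction h with
    | basic s hs => exact hs
    | univ => exact tau_univ u v
    | inter s t _ _ ih1 ih2 => exact tau_inter u v s ih1 t ih2
    | sUnion 𝒮 _ ih => exact tau_sUnion u v 𝒮 fun s hs => ih s hs
  · exact fun h => TopologicalSpace.GenerateOpen.basic _ h

/-! ### Joint continuity of the net map -/

theorem key_joint (u : CechClosure X) (v : CechClosure Y) {Λ : Type u}
    (leΛ : Λ → Λ → Prop) (hΛ : IsDirectedOrder leΛ) (F : Λ → ContMap u v)
    (f : ContMap u v)
    (hUL : ∀ B : Set Y, UpperLim u leΛ (fun l => (F l).1 ⁻¹' B) ⊆ f.1 ⁻¹' (v.cl B)) :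
    Continuous ((netSpace leΛ hΛ).prod u) v
      (fun p : Option Λ × X => (p.1.elim f F).1 p.2) := by
  intro S
  rintro y ⟨⟨z, x⟩, hp, rfl⟩
  set g : Option Λ × X → Y := fun p => (p.1.elim f F).1 p.2 with hg
  cases z with
  | some l =>
    -- z = some l: use the singleton neighbourhood {some l}
    set T : Set X := {x' | (some l, x') ∈ S} with hT
    have hxT : x ∈ u.cl T := by
      rw [mem_cl_iff]
      intro U hU
      rcases hp {some l} U (netSpace_nhd_some.mpr rfl) hU with ⟨⟨z', x'⟩, ⟨hz', hx'⟩, hS⟩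
      rcases hz' with rfl
      exact ⟨x', hx', hS⟩
    have h1 : (F l).1 x ∈ v.cl ((F l).1 '' T) := (F l).2 T ⟨x, hxT, rfl⟩
    refine cl_mono v ?_ h1
    rintro y' ⟨x', hx', rfl⟩
    exact ⟨(some l, x'), hx', rfl⟩
  | none =>
    -- split S into the part over none and the part over some
    set S₁ : Set (Option Λ × X) := {p ∈ S | p.1 = none} with hS₁
    set S₂ : Set (Option Λ × X) := {p ∈ S | p.1 ≠ none} with hS₂
    have hSeq : S = S₁ ∪ S₂ := by
      ext p
      by_cases hp1 : p.1 = none <;> simp [hS₁, hS₂, hp1]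
    rw [hSeq, ((netSpace leΛ hΛ).prod u).cl_union] at hp
    have himg : g '' S₁ ∪ g '' S₂ ⊆ g '' S := by
      rw [hSeq, image_union]
    rcases hp with hp | hp
    · -- over none: use continuity of f
      set T : Set X := {x' | (none, x') ∈ S} with hT
      have hxT : x ∈ u.cl T := by
        rw [mem_cl_iff]
        intro U hU
        rcases hp univ U ((netSpace leΛ hΛ).nhd_univ none) hU
          with ⟨⟨z', x'⟩, ⟨-, hx'⟩, hS, hz'⟩
        rcases hz' with rfl
        exact ⟨x', hx', hS⟩
      have h1 : f.1 x ∈ v.cl (f.1 '' T) := f.2 T ⟨x, hxT, rfl⟩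
      refine cl_mono v ?_ h1
      rintro y' ⟨x', hx', rfl⟩
      exact ⟨(none, x'), hx', rfl⟩
    · -- over somes: use the upper-limit hypothesis
      set B : Set Y := g '' S with hB
      have hx : x ∈ UpperLim u leΛ fun l => (F l).1 ⁻¹' B := by
        intro l₀ U hU
        set W : Set (Option Λ) := {z | z = none ∨ ∃ l, leΛ l₀ l ∧ z = some l} with hW
        have hWnhd : (netSpace leΛ hΛ).Nhd none W :=
          netSpace_nhd_none.mpr ⟨Or.inl rfl, l₀, fun l hl => Or.inr ⟨l, hl, rfl⟩⟩
        rcases hp W U hWnhd hU with ⟨⟨z', x'⟩, ⟨hz', hx'⟩, hS, hz'ne⟩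
        rcases hz' with hz' | ⟨l, hl, rfl⟩
        · exact absurd hz' hz'ne
        · exact ⟨l, hl, x', ⟨(some l, x'), hS, rfl⟩, hx'⟩
      exact hUL B hx

/-! ### Properness consequences -/

theorem exists_mem_of_proper (u : CechClosure X) (v : CechClosure Y)
    (t : TopologicalSpace (ContMap u v)) (ht : Proper u v (ofTop t))
    {G : Set (ContMap u v)} (hG : t.IsOpen G) {f : ContMap u v} (hf : f ∈ G)
    {Λ : Type u} (leΛ : Λ → Λ → Prop) (hΛ : IsDirectedOrder leΛ)
    (F : Λ → ContMap u v)
    (hUL : ∀ B : Set Y, UpperLim u leΛ (fun l => (F l).1 ⁻¹' B) ⊆ f.1 ⁻¹' (v.cl B)) :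
    ∃ l, F l ∈ G := by
  have hcont := ht (Option Λ) (netSpace leΛ hΛ) (fun z => z.elim f F)
    (key_joint u v leΛ hΛ F f hUL)
  have h1 : (none : Option Λ) ∈ (netSpace leΛ hΛ).cl (range some) :=
    Or.inr ⟨rfl, fun l₀ => ⟨l₀, hΛ.refl l₀, ⟨l₀, rfl⟩⟩⟩
  have h2 : f ∈ (ofTop t).cl ((fun z : Option Λ => z.elim f F) '' range some) :=
    hcont (range some) ⟨none, h1, rfl⟩
  have h3 : f ∈ @_root_.closure _ t ((fun z : Option Λ => z.elim f F) '' range some) := h2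
  letI := t
  rcases (mem_closure_iff.mp h3) G hG hf with ⟨g', hg'G, ⟨z, ⟨l, rfl⟩, rfl⟩⟩
  exact ⟨l, hg'G⟩

theorem proper_open_mem_tau (u : CechClosure X) (v : CechClosure Y)
    (t : TopologicalSpace (ContMap u v)) (ht : Proper u v (ofTop t))
    (G : Set (ContMap u v)) (hG : t.IsOpen G) : G ∈ tau u v := by
  intro f hf Λ leΛ hΛ F hUL
  by_contra hc
  push_neg at hc
  -- the subnet of indices avoiding G
  set M : Type u := {l : Λ // F l ∉ G} with hM
  set leM : M → M → Prop := fun m₁ m₂ => leΛ m₁.1 m₂.1 with hleM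
  have hMdir : IsDirectedOrder leM := by
    constructor
    · exact fun m => hΛ.refl m.1
    · exact fun a b c hab hbc => hΛ.trans _ _ _ hab hbc
    · intro a b
      obtain ⟨c, hac, hbc⟩ := hΛ.directed a.1 b.1
      obtain ⟨l, hcl, hlG⟩ := hc c
      exact ⟨⟨l, hlG⟩, hΛ.trans _ _ _ hac hcl, hΛ.trans _ _ _ hbc hcl⟩
    · obtain ⟨l₀⟩ := hΛ.nonempty
      obtain ⟨l, -, hlG⟩ := hc l₀
      exact ⟨⟨l, hlG⟩⟩
  have hUL' : ∀ B : Set Y,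
      UpperLim u leM (fun m => (F m.1).1 ⁻¹' B) ⊆ f.1 ⁻¹' (v.cl B) := by
    intro B x hx
    refine hUL B ?_
    intro l₀ U hU
    obtain ⟨l₁, hl₁, hl₁G⟩ := hc l₀
    rcases hx ⟨l₁, hl₁G⟩ U hU with ⟨m, hm, hne⟩
    exact ⟨m.1, hΛ.trans _ _ _ hl₁ hm, hne⟩
  obtain ⟨m, hm⟩ := exists_mem_of_proper u v t ht hG hf leM hMdir
    (fun m => F m.1) hUL'
  exact m.2 hm

theorem tau_proper (u : CechClosure X) (v : CechClosure Y) :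
    Proper u v (ofTop (TopologicalSpace.generateFrom (tau u v))) := by
  intro Z w G hg A
  rintro g' ⟨z, hz, rfl⟩
  letI := TopologicalSpace.generateFrom (tau u v)
  show G z ∈ @_root_.closure _ _ (G '' A)
  rw [mem_closure_iff]
  intro O hO hzO
  replace hO : O ∈ tau u v := (isOpen_generateFrom_tau_iff u v O).mp hO
  -- the directed set of neighbourhoods of z
  set Λz : Type u := {W : Set Z // w.Nhd z W} with hΛz
  set leW : Λz → Λz → Prop := fun W W' => W'.1 ⊆ W.1 with hleW
  have hdir : IsDirectedOrder leW := by
    constructor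
    · exact fun W => subset_rfl
    · exact fun a b c hab hbc => hbc.trans hab
    · exact fun a b => ⟨⟨a.1 ∩ b.1, w.nhd_inter a.2 b.2⟩, inter_subset_left,
        inter_subset_right⟩
    · exact ⟨⟨univ, w.nhd_univ z⟩⟩
  have hmeets : ∀ W : Λz, (W.1 ∩ A).Nonempty :=
    fun W => (mem_cl_iff w A z).mp hz W.1 W.2
  choose a haW haA using hmeets
  set F : Λz → ContMap u v := fun W => G (a W) with hF
  have hUL : ∀ B : Set Y,
      UpperLim u leW (fun W => (F W).1 ⁻¹' B) ⊆ (G z).1 ⁻¹' (v.cl B) := by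
    intro B x hx
    set S : Set (Z × X) := (fun p : Z × X => (G p.1).1 p.2) ⁻¹' B with hS
    have hzx : (z, x) ∈ (w.prod u).cl S := by
      intro W U hW hU
      rcases hx ⟨W, hW⟩ U hU with ⟨W', hW', x', hx'B, hx'U⟩
      exact ⟨(a W', x'), ⟨hW' (haW W'), hx'U⟩, hx'B⟩
    have h1 : (G z).1 x ∈ v.cl ((fun p : Z × X => (G p.1).1 p.2) '' S) :=
      hg S ⟨(z, x), hzx, rfl⟩
    exact cl_mono v (image_preimage_subset _ _) h1
  obtain ⟨W₀, hW₀⟩ := hO (G z) hzO Λz leW hdir F hUL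
  exact ⟨F W₀, hW₀ W₀ (hdir.refl W₀), a W₀, haA W₀, rfl⟩

/-- `τ` is a topology on `Y^X`; it (i.e. its Kuratowski closure operator) is proper, and
every proper topology on `Y^X` is coarser than `τ`; consequently a subset `G` of `Y^X` is
open in the finest proper topology (the topology generated by `τ`, which is `τ` itself)
iff `G ∈ τ`. -/
theorem tau_is_finest_proper_topology (u : CechClosure X) (v : CechClosure Y) :
    -- `τ` is a topology:
    (Set.univ ∈ tau u v) ∧
    (∀ G₁ ∈ tau u v, ∀ G₂ ∈ tau u v, G₁ ∩ G₂ ∈ tau u v) ∧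
    (∀ 𝒢 ⊆ tau u v, ⋃₀ 𝒢 ∈ tau u v) ∧
    -- `τ` is proper:
    Proper u v (ofTop (TopologicalSpace.generateFrom (tau u v))) ∧
    -- every proper topology is coarser than `τ`:
    (∀ t : TopologicalSpace (ContMap u v), Proper u v (ofTop t) →
      ∀ G : Set (ContMap u v), t.IsOpen G → G ∈ tau u v) ∧
    -- a set is open in the finest proper topology iff it belongs to `τ`:
    (∀ G : Set (ContMap u v),
      (TopologicalSpace.generateFrom (tau u v)).IsOpen G ↔ G ∈ tau u v) := by
  exact ⟨tau_univ u v, tau_inter u v, tau_sUnion u v, tau_proper u v,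
    proper_open_mem_tau u v, isOpen_generateFrom_tau_iff u v⟩

end CechClosure
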